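/- arXiv:1902.04424 — 5 statements merged into one kernel-verified Lean document; each statement's English description precedes it below -/
import Mathlib

section
/- If A is a semicomputable subset of ℕ, then the pair (A, complement of A) is a Kalimullin pair: there is a computably enumerable set W ⊆ ℕ × ℕ such that A × Aᶜ ⊆ W and Aᶜ × A ⊆ Wᶜ. (Take W := {(x,y) : s_A(x,y) = x} where s_A is a computable selector for A.) -/
/-- Canonical computable coding of finite subsets of ℕ. -/
def Kfin (x : ℕ) : Finset ℕ := Denumerable.ofNat (Finset ℕ) x

/-- `s` is a selector function for the set `S`. -/
def Selector (S : Set ℕ) (s : ℕ → ℕ → ℕ) : Prop :=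
  (∀ x y, s x y = x ∨ s x y = y) ∧ ∀ x y, (x ∈ S ∨ y ∈ S) → s x y ∈ S

/-- A set is semicomputable iff it has a total computable selector function. -/
def SemiComputable (S : Set ℕ) : Prop :=
  ∃ s : ℕ → ℕ → ℕ, Computable₂ s ∧ Selector S s

/-- Computable join of two sets of naturals. -/
def join (A B : Set ℕ) : Set ℕ :=
  {n | ∃ a ∈ A, n = 2 * a} ∪ {n | ∃ b ∈ B, n = 2 * b + 1}

/-- Enumeration reducibility on subsets of ℕ. -/
def EnumReducible (A B : Set ℕ) : Prop :=
  ∃ Φ : Set (ℕ × ℕ), REPred (· ∈ Φ) ∧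
    ∀ x, x ∈ A ↔ ∃ d, (x, d) ∈ Φ ∧ (↑(Kfin d) : Set ℕ) ⊆ B

/-- A Kalimullin pair with a c.e. witness. -/
def KPair (A B : Set ℕ) : Prop :=
  ∃ W : Set (ℕ × ℕ), REPred (· ∈ W) ∧
    (∀ a ∈ A, ∀ b ∈ B, (a, b) ∈ W) ∧ (∀ a ∉ A, ∀ b ∉ B, (a, b) ∉ W)

/-- The binary (strict) ordering on subsets of ℕ. -/
def bLt (A B : Set ℕ) : Prop :=
  ∃ β : ℕ, β ∉ A ∧ β ∈ B ∧ ∀ x < β, (x ∈ A ↔ x ∈ B)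

/-- The binary (non-strict) ordering on subsets of ℕ. -/
def bLe (A B : Set ℕ) : Prop := bLt A B ∨ A = B

theorem kpair_of_semicomputable (A : Set ℕ) (h : SemiComputable A) :
    KPair A Aᶜ := by
  obtain ⟨s, hs, hsel, hmem⟩ := h
  refine ⟨{p | s p.1 p.2 = p.1}, ?_, ?_, ?_⟩
  · apply ComputablePred.to_re
    rw [ComputablePred.computable_iff]
    refine ⟨fun p => decide (s p.1 p.2 = p.1), ?_, ?_⟩
    · exact (Primrec.eq (α := ℕ)).decide.to_comp.comp
        (hs.comp Computable.fst Computable.snd) Computable.fst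
    · funext p; simp
  · intro a ha b hb
    rcases hsel a b with h1 | h1
    · exact h1
    · exact absurd (h1 ▸ hmem a b (Or.inl ha)) hb
  · intro a ha b hb hw
    have hw' : s a b = a := hw
    exact ha (hw' ▸ hmem a b (Or.inr (not_not.mp hb)))
end

section
/- Suppose A, B ⊆ ℕ are both not computably enumerable and (A,B) is a Kalimullin pair with c.e. witness W (i.e., A × B ⊆ W and Aᶜ × Bᶜ ⊆ Wᶜ). Then A = {a : ∃ b, b ∉ B ∧ (a,b) ∈ W} and B = {b : ∃ a, a ∉ A ∧ (a,b) ∈ W}. -/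
lemma rePred_slice_right (W : Set (ℕ × ℕ)) (hW : REPred (· ∈ W)) (a : ℕ) :
    REPred (fun b => (a, b) ∈ W) :=
  Partrec.comp hW ((Computable.const a).pair Computable.id)

lemma rePred_slice_left (W : Set (ℕ × ℕ)) (hW : REPred (· ∈ W)) (b : ℕ) :
    REPred (fun a => (a, b) ∈ W) :=
  Partrec.comp hW (Computable.id.pair (Computable.const b))

theorem kpair_witness_characterization (A B : Set ℕ) (W : Set (ℕ × ℕ))
    (hA : ¬ REPred (· ∈ A)) (hB : ¬ REPred (· ∈ B)) (hW : REPred (· ∈ W))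
    (h1 : ∀ a ∈ A, ∀ b ∈ B, (a, b) ∈ W) (h2 : ∀ a ∉ A, ∀ b ∉ B, (a, b) ∉ W) :
    A = {a : ℕ | ∃ b, b ∉ B ∧ (a, b) ∈ W} ∧
    B = {b : ℕ | ∃ a, a ∉ A ∧ (a, b) ∈ W} := by
  constructor
  · ext a
    simp only [Set.mem_setOf_eq]
    constructor
    · intro ha
      by_contra hcon
      push_neg at hcon
      apply hB
      have : (fun b => b ∈ B) = fun b => (a, b) ∈ W := by
        funext b
        simp only [eq_iff_iff]
        constructor
        · intro hb; exact h1 a ha b hb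
        · intro hw; by_contra hnb; exact hcon b hnb hw
      rw [show (· ∈ B) = fun b => b ∈ B from rfl, this]
      exact rePred_slice_right W hW a
    · rintro ⟨b, hb, hw⟩
      by_contra hna
      exact h2 a hna b hb hw
  · ext b
    simp only [Set.mem_setOf_eq]
    constructor
    · intro hb
      by_contra hcon
      push_neg at hcon
      apply hA
      have : (fun a => a ∈ A) = fun a => (a, b) ∈ W := by
        funext a
        simp only [eq_iff_iff]
        constructor
        · intro ha; exact h1 a ha b hb
        · intro hw; by_contra hna; exact hcon a hna hw
      rw [show (· ∈ A) = fun a => a ∈ A from rfl, this]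
      exact rePred_slice_left W hW b
    · rintro ⟨a, ha, hw⟩
      by_contra hnb
      exact h2 a ha b hnb hw
end

section
/- Suppose A, B ⊆ ℕ are both non-c.e. and form a Kalimullin pair. Then A is enumeration reducible to the complement of B, and B is enumeration reducible to the complement of A. -/
theorem Kfin_pair_singleton (b : ℕ) : Kfin (Nat.pair b 0 + 1) = {b} := by
  have h := @Denumerable.ofNat_encode (Finset ℕ) _ ({b})
  rw [Kfin]
  rw [show Nat.pair b 0 + 1 = @Encodable.encode (Finset ℕ) Denumerable.toEncodable {b} from ?_, h]
  show _ = @Encodable.encode (List ℕ) _ (Denumerable.lower' (Finset.sort (Finset.map _ {b}) _) 0)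
  simp [Finset.sort_singleton, Denumerable.lower', Encodable.encode_list_cons,
    Encodable.encode_list_nil, Denumerable.eqv]

theorem kpair_half (A B : Set ℕ) (hB : ¬ REPred (· ∈ B)) (W : Set (ℕ × ℕ))
    (hW : REPred (· ∈ W)) (h1 : ∀ a ∈ A, ∀ b ∈ B, (a, b) ∈ W)
    (h2 : ∀ a ∉ A, ∀ b ∉ B, (a, b) ∉ W) : EnumReducible A Bᶜ := by
  classical
  set fW : ℕ × ℕ →. Unit := fun q => Part.assert (q ∈ W) fun _ => Part.some () with hfW
  have hfWdom : ∀ q, (fW q).Dom ↔ q ∈ W := by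
    intro q
    simp [hfW, Part.assert]
  set o : ℕ × ℕ → Option ℕ := fun p =>
    if p.2 = Nat.pair (p.2 - 1).unpair.1 0 + 1 then some (p.2 - 1).unpair.1 else none with ho
  have homem : ∀ p b, o p = some b ↔ p.2 = Nat.pair b 0 + 1 := by
    intro p b
    constructor
    · intro hp
      rw [ho] at hp
      simp only at hp
      split at hp
      · rename_i hc
        cases hp
        exact hc
      · simp at hp
    · intro hp
      rw [ho]
      simp only
      have hu : (p.2 - 1).unpair.1 = b := by
        rw [hp]
        simp [Nat.unpair_pair]
      rw [hu, ← hp]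
      simp
  have hoc : Computable o := by
    have hg : Primrec fun p : ℕ × ℕ => Nat.pair (p.2 - 1).unpair.1 0 + 1 :=
      Primrec.succ.comp (Primrec₂.natPair.comp
        (Primrec.fst.comp (Primrec.unpair.comp (Primrec.pred.comp Primrec.snd)))
        (Primrec.const 0))
    have : Primrec o := by
      rw [ho]
      exact Primrec.ite (Primrec.eq.comp Primrec.snd hg)
        (Primrec.option_some.comp
          (Primrec.fst.comp (Primrec.unpair.comp (Primrec.pred.comp Primrec.snd))))
        (Primrec.const none)
    exact this.to_comp
  have hf : Partrec fun p : ℕ × ℕ => ((o p : Part ℕ)).bind fun b => fW (p.1, b) := by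
    refine (Computable.ofOption hoc).bind ?_
    exact (hW.comp ((Computable.fst.comp Computable.fst).pair Computable.snd)).to₂
  have hdom : ∀ p : ℕ × ℕ, (((o p : Part ℕ)).bind fun b => fW (p.1, b)).Dom ↔
      ∃ b, p.2 = Nat.pair b 0 + 1 ∧ (p.1, b) ∈ W := by
    intro p
    rw [Part.dom_iff_mem]
    constructor
    · rintro ⟨u, hu⟩
      rcases Part.mem_bind_iff.1 hu with ⟨b, hb, hub⟩
      rw [Part.mem_coe, Option.mem_def] at hb
      refine ⟨b, (homem p b).1 hb, ?_⟩
      rw [← hfWdom (p.1, b), Part.dom_iff_mem]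
      exact ⟨u, hub⟩
    · rintro ⟨b, hb, hbW⟩
      have h1' : (fW (p.1, b)).Dom := (hfWdom _).2 hbW
      refine ⟨(fW (p.1, b)).get h1', Part.mem_bind_iff.2 ⟨b, ?_, Part.get_mem h1'⟩⟩
      rw [Part.mem_coe, Option.mem_def]
      exact (homem p b).2 hb
  refine ⟨{p | ∃ b, p.2 = Nat.pair b 0 + 1 ∧ (p.1, b) ∈ W}, ?_, ?_⟩
  · exact hf.dom_re.of_eq hdom
  · intro x
    constructor
    · intro hx
      have hbex : ∃ b, b ∉ B ∧ (x, b) ∈ W := by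
        by_contra hc
        push_neg at hc
        apply hB
        have hsec : Partrec fun b : ℕ => fW (x, b) :=
          hW.comp ((Computable.const x).pair Computable.id)
        refine hsec.dom_re.of_eq fun b => ?_
        rw [hfWdom]
        constructor
        · intro hbW
          by_contra hb
          exact hc b hb hbW
        · intro hb
          exact h1 x hx b hb
      obtain ⟨b, hb, hbW⟩ := hbex
      refine ⟨Nat.pair b 0 + 1, ⟨b, rfl, hbW⟩, ?_⟩
      rw [Kfin_pair_singleton]
      simp [Set.singleton_subset_iff]
      exact hb
    · rintro ⟨d, ⟨b, hd, hbW⟩, hsub⟩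
      have hKd : Kfin d = {b} := by
        simp only at hd
        rw [hd]; exact Kfin_pair_singleton b
      have hbB : b ∉ B := by
        have : b ∈ (↑(Kfin d) : Set ℕ) := by rw [hKd]; simp
        exact hsub this
      by_contra hx
      exact h2 x hx b hbB hbW

theorem kpair_enumReducible_compl (A B : Set ℕ)
    (hA : ¬ REPred (· ∈ A)) (hB : ¬ REPred (· ∈ B)) (h : KPair A B) :
    EnumReducible A Bᶜ ∧ EnumReducible B Aᶜ := by
  obtain ⟨W, hW, h1, h2⟩ := h
  constructor
  · exact kpair_half A B hB W hW h1 h2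
  · refine kpair_half B A hA {q : ℕ × ℕ | (q.2, q.1) ∈ W} ?_ ?_ ?_
    · exact hW.comp (Computable.snd.pair Computable.fst)
    · intro b hb a ha
      exact h1 a ha b hb
    · intro b hb a ha
      exact h2 a ha b hb
end

section
/- Kalimullin pair distributivity: let A₀, A₁, B ⊆ ℕ with A₀ and A₁ nonempty. Then the following are equivalent: (1) both (A₀,B) and (A₁,B) are Kalimullin pairs; (2) (A₀ ⊕ A₁, B) is a Kalimullin pair, where A₀ ⊕ A₁ = {2a : a ∈ A₀} ∪ {2a+1 : a ∈ A₁}; (3) (A₀ × A₁, B) is a Kalimullin pair (viewing A₀ × A₁ ⊆ ℕ via a computable pairing bijection ℕ × ℕ → ℕ). -/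
section aux

lemma rePred_comp {α β} [Primcodable α] [Primcodable β] {p : β → Prop} {f : α → β}
    (hp : REPred p) (hf : Computable f) : REPred fun a => p (f a) :=
  Partrec.comp hp hf

lemma rePred_and {α} [Primcodable α] {p q : α → Prop} (hp : REPred p) (hq : REPred q) :
    REPred fun a => p a ∧ q a := by
  have h : Partrec fun a =>
      (Part.assert (p a) fun _ => Part.some ()).bind fun _ =>
        Part.assert (q a) fun _ => Part.some () :=
    Partrec.bind hp (hq.comp Computable.fst)
  exact (h.dom_re).of_eq fun a => by simp [Part.assert]

lemma rePred_cond {α} [Primcodable α] {c : α → Bool} {p q : α → Prop}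
    (hc : Computable c) (hp : REPred p) (hq : REPred q) :
    REPred fun a => if c a then p a else q a := by
  have h := Partrec.cond hc hp hq
  refine h.dom_re.of_eq fun a => ?_
  cases hca : c a <;> simp [hca, Part.assert]

lemma kpair_join {A0 A1 B : Set ℕ} (k0 : KPair A0 B) (k1 : KPair A1 B) :
    KPair (join A0 A1) B := by
  obtain ⟨W0, hW0, hin0, hout0⟩ := k0
  obtain ⟨W1, hW1, hin1, hout1⟩ := k1
  refine ⟨{p : ℕ × ℕ | if p.1 % 2 = 0 then (p.1 / 2, p.2) ∈ W0 else (p.1 / 2, p.2) ∈ W1},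
    ?_, ?_, ?_⟩
  · have hf : Computable fun p : ℕ × ℕ => (p.1 / 2, p.2) :=
      ((Primrec.nat_div.comp (Primrec.fst) (Primrec.const 2)).pair Primrec.snd).to_comp
    have hc : Computable fun p : ℕ × ℕ => decide (p.1 % 2 = 0) :=
      (Primrec.eq.comp (Primrec.nat_mod.comp Primrec.fst (Primrec.const 2))
        (Primrec.const 0)).decide.to_comp
    have := rePred_cond (p := fun p : ℕ × ℕ => (p.1 / 2, p.2) ∈ W0)
      (q := fun p : ℕ × ℕ => (p.1 / 2, p.2) ∈ W1) hc
      (rePred_comp hW0 hf) (rePred_comp hW1 hf)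
    exact this.of_eq fun a => by simp
  · rintro a (⟨a', ha', rfl⟩ | ⟨a', ha', rfl⟩) b hb
    · simpa [Nat.mul_div_cancel_left, Nat.mul_mod_right] using hin0 a' ha' b hb
    · have h1 : (2 * a' + 1) % 2 = 1 := by omega
      have h2 : (2 * a' + 1) / 2 = a' := by omega
      simp only [Set.mem_setOf_eq, h1, h2]
      simpa using hin1 a' ha' b hb
  · intro a ha b hb
    simp only [Set.mem_setOf_eq]
    rcases Nat.even_or_odd a with ⟨m, hm⟩ | ⟨m, hm⟩
    · have h1 : a % 2 = 0 := by omega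
      have h2 : a / 2 = m := by omega
      have hm0 : m ∉ A0 := fun h => ha (Or.inl ⟨m, h, by omega⟩)
      simp [h1, h2, hout0 m hm0 b hb]
    · have h1 : a % 2 = 1 := by omega
      have h2 : a / 2 = m := by omega
      have hm1 : m ∉ A1 := fun h => ha (Or.inr ⟨m, h, by omega⟩)
      simp [h1, h2, hout1 m hm1 b hb]

lemma kpair_of_join {A0 A1 B : Set ℕ} (k : KPair (join A0 A1) B) :
    KPair A0 B ∧ KPair A1 B := by
  obtain ⟨W, hW, hin, hout⟩ := k
  constructor
  · refine ⟨{p : ℕ × ℕ | (2 * p.1, p.2) ∈ W}, ?_, ?_, ?_⟩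
    · show REPred fun p : ℕ × ℕ => (2 * p.1, p.2) ∈ W
      exact rePred_comp hW
        ((Primrec.nat_mul.comp (Primrec.const 2) Primrec.fst).pair Primrec.snd).to_comp
    · intro a ha b hb
      exact hin (2 * a) (Or.inl ⟨a, ha, rfl⟩) b hb
    · intro a ha b hb
      refine hout (2 * a) ?_ b hb
      rintro (⟨a', ha', h⟩ | ⟨a', ha', h⟩)
      · obtain rfl : a = a' := by omega
        exact ha ha'
      · omega
  · refine ⟨{p : ℕ × ℕ | (2 * p.1 + 1, p.2) ∈ W}, ?_, ?_, ?_⟩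
    · show REPred fun p : ℕ × ℕ => (2 * p.1 + 1, p.2) ∈ W
      exact rePred_comp hW
        ((Primrec.nat_add.comp (Primrec.nat_mul.comp (Primrec.const 2) Primrec.fst)
          (Primrec.const 1)).pair Primrec.snd).to_comp
    · intro a ha b hb
      exact hin (2 * a + 1) (Or.inr ⟨a, ha, rfl⟩) b hb
    · intro a ha b hb
      refine hout (2 * a + 1) ?_ b hb
      rintro (⟨a', ha', h⟩ | ⟨a', ha', h⟩)
      · omega
      · obtain rfl : a = a' := by omega
        exact ha ha'

lemma kpair_prod {A0 A1 B : Set ℕ} (k0 : KPair A0 B) (k1 : KPair A1 B) :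
    KPair {n : ℕ | n.unpair.1 ∈ A0 ∧ n.unpair.2 ∈ A1} B := by
  obtain ⟨W0, hW0, hin0, hout0⟩ := k0
  obtain ⟨W1, hW1, hin1, hout1⟩ := k1
  refine ⟨{p : ℕ × ℕ | (p.1.unpair.1, p.2) ∈ W0 ∧ (p.1.unpair.2, p.2) ∈ W1}, ?_, ?_, ?_⟩
  · exact rePred_and
      (rePred_comp hW0 (((Primrec.fst.comp (Primrec.unpair.comp Primrec.fst)).pair
        Primrec.snd).to_comp))
      (rePred_comp hW1 (((Primrec.snd.comp (Primrec.unpair.comp Primrec.fst)).pair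
        Primrec.snd).to_comp))
  · rintro a ⟨ha0, ha1⟩ b hb
    exact ⟨hin0 _ ha0 b hb, hin1 _ ha1 b hb⟩
  · intro a ha b hb
    rintro ⟨h0, h1⟩
    rcases not_and_or.1 ha with ha0 | ha1
    · exact hout0 _ ha0 b hb h0
    · exact hout1 _ ha1 b hb h1

lemma kpair_of_prod {A0 A1 B : Set ℕ} (h0 : A0.Nonempty) (h1 : A1.Nonempty)
    (k : KPair {n : ℕ | n.unpair.1 ∈ A0 ∧ n.unpair.2 ∈ A1} B) :
    KPair A0 B ∧ KPair A1 B := by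
  obtain ⟨W, hW, hin, hout⟩ := k
  obtain ⟨a0, ha0⟩ := h0
  obtain ⟨a1, ha1⟩ := h1
  constructor
  · refine ⟨{p : ℕ × ℕ | (Nat.pair p.1 a1, p.2) ∈ W}, ?_, ?_, ?_⟩
    · show REPred fun p : ℕ × ℕ => (Nat.pair p.1 a1, p.2) ∈ W
      exact rePred_comp hW
        (((Primrec₂.natPair.comp Primrec.fst (Primrec.const a1)).pair Primrec.snd).to_comp)
    · intro a ha b hb
      exact hin (Nat.pair a a1) (by simp [ha, ha1]) b hb
    · intro a ha b hb
      exact hout (Nat.pair a a1) (by simp [ha]) b hb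
  · refine ⟨{p : ℕ × ℕ | (Nat.pair a0 p.1, p.2) ∈ W}, ?_, ?_, ?_⟩
    · show REPred fun p : ℕ × ℕ => (Nat.pair a0 p.1, p.2) ∈ W
      exact rePred_comp hW
        (((Primrec₂.natPair.comp (Primrec.const a0) Primrec.fst).pair Primrec.snd).to_comp)
    · intro a ha b hb
      exact hin (Nat.pair a0 a) (by simp [ha, ha0]) b hb
    · intro a ha b hb
      exact hout (Nat.pair a0 a) (by simp [ha]) b hb

end aux

theorem kpair_distributivity (A0 A1 B : Set ℕ) (h0 : A0.Nonempty) (h1 : A1.Nonempty) :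
    ((KPair A0 B ∧ KPair A1 B) ↔ KPair (join A0 A1) B) ∧
    ((KPair A0 B ∧ KPair A1 B) ↔
      KPair {n : ℕ | n.unpair.1 ∈ A0 ∧ n.unpair.2 ∈ A1} B) := by
  refine ⟨⟨fun ⟨k0, k1⟩ => kpair_join k0 k1, kpair_of_join⟩,
    ⟨fun ⟨k0, k1⟩ => kpair_prod k0 k1, kpair_of_prod h0 h1⟩⟩
end

section
/- The collection of sets A forming a Kalimullin pair with a fixed set B is closed downward under enumeration reducibility: if (A₀, B) is a Kalimullin pair and A₁ ≤_e A₀, then (A₁, B) is a Kalimullin pair. -/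
/-! ### Auxiliary machinery -/

open Nat.Partrec (Code)
open Nat.Partrec.Code

/-- List of elements of `Kfin d`. -/
def klist (d : ℕ) : List ℕ := Denumerable.raise' (Denumerable.ofNat (List ℕ) d) 0

theorem mem_Kfin (x d : ℕ) : x ∈ Kfin d ↔ x ∈ klist d := by
  show x ∈ Finset.map (Denumerable.eqv ℕ).symm.toEmbedding
    (Denumerable.raise'Finset (Denumerable.ofNat (List ℕ) d) 0) ↔ _
  simp [Finset.mem_map, Denumerable.raise'Finset, klist, Finset.mem_mk,
    Equiv.toEmbedding, Denumerable.eqv]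
  exact Iff.rfl

theorem raise'_foldl (l : List ℕ) (A : List ℕ) (n : ℕ) :
    (l.foldl (fun acc m => (acc.1 ++ [m + acc.2], m + acc.2 + 1)) (A, n)).1
      = A ++ Denumerable.raise' l n := by
  induction l generalizing A n with
  | nil => simp [Denumerable.raise']
  | cons m l ih => simp [Denumerable.raise', ih]

theorem klist_primrec : Primrec klist := by
  have h : Primrec fun d : ℕ =>
      ((Denumerable.ofNat (List ℕ) d).foldl
        (fun acc m => (acc.1 ++ [m + acc.2], m + acc.2 + 1)) (([] : List ℕ), 0)).1 := by
    exact Primrec.fst.comp (Primrec.list_foldl (Primrec.ofNat (List ℕ))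
      (Primrec.const (([] : List ℕ), 0))
      (Primrec.to₂ (Primrec.pair
        ((Primrec.list_concat).comp (Primrec.fst.comp (Primrec.fst.comp Primrec.snd))
          (Primrec.nat_add.comp (Primrec.snd.comp Primrec.snd)
            (Primrec.snd.comp (Primrec.fst.comp Primrec.snd))))
        (Primrec.succ.comp (Primrec.nat_add.comp (Primrec.snd.comp Primrec.snd)
          (Primrec.snd.comp (Primrec.fst.comp Primrec.snd)))))))
  refine h.of_eq fun d => ?_
  rw [raise'_foldl]; simp [klist]

theorem primrec_all {α β : Type*} [Primcodable α] [Primcodable β]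
    {f : α → List β} {p : α → β → Bool} (hf : Primrec f) (hp : Primrec₂ p) :
    Primrec fun a => (f a).all (p a) := by
  have h : Primrec fun a => (f a).foldr (fun b s => p a b && s) true := by
    exact Primrec.list_foldr hf (Primrec.const true) <| Primrec.to₂ <|
      (Primrec.dom_bool₂ (· && ·)).comp
      (hp.comp Primrec.fst (Primrec.fst.comp Primrec.snd))
      (Primrec.snd.comp Primrec.snd)
  refine h.of_eq fun a => ?_
  induction f a with
  | nil => rfl
  | cons b l ih => simp [ih]

theorem primrec_any {α β : Type*} [Primcodable α] [Primcodable β]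
    {f : α → List β} {p : α → β → Bool} (hf : Primrec f) (hp : Primrec₂ p) :
    Primrec fun a => (f a).any (p a) := by
  have h : Primrec fun a => (f a).foldr (fun b s => p a b || s) false := by
    exact Primrec.list_foldr hf (Primrec.const false) <| Primrec.to₂ <|
      (Primrec.dom_bool₂ (· || ·)).comp
      (hp.comp Primrec.fst (Primrec.fst.comp Primrec.snd))
      (Primrec.snd.comp Primrec.snd)
  refine h.of_eq fun a => ?_
  induction f a with
  | nil => rfl
  | cons b l ih => simp [ih]

theorem re_of_exists_bool {α : Type*} [Primcodable α] {p : α → Prop} {f : α → ℕ → Bool}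
    (hf : Computable₂ f) (H : ∀ a, p a ↔ ∃ n, f a n = true) : REPred p := by
  have hp : Partrec fun a => Nat.rfind fun n => (Part.some (f a n) : Part Bool) :=
    Partrec.rfind (hf.partrec₂)
  refine (hp.dom_re).of_eq fun a => ?_
  refine (Nat.rfind_dom (p := fun n => Part.some (f a n))).trans ?_
  constructor
  · rintro ⟨n, h, _⟩
    exact (H a).2 ⟨n, by simpa using h⟩
  · rintro h
    obtain ⟨n, hn⟩ := (H a).1 h
    exact ⟨n, by simpa using hn, fun _ => trivial⟩

theorem exists_bool_of_re {α : Type*} [Primcodable α] {p : α → Prop} (hp : REPred p) :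
    ∃ f : α → ℕ → Bool, Primrec₂ f ∧ ∀ a, p a ↔ ∃ n, f a n = true := by
  unfold REPred at hp
  obtain ⟨c, hc⟩ := exists_code.1 hp
  refine ⟨fun a k => (evaln k c (Encodable.encode a)).isSome, ?_, fun a => ?_⟩
  · exact Primrec.option_isSome.comp
      (primrec_evaln.comp (((Primrec.snd).pair (Primrec.const c)).pair
        (Primrec.encode.comp Primrec.fst)))
  · have : p a ↔ (eval c (Encodable.encode a)).Dom := by
      rw [hc]
      simp [Part.assert]
    rw [this]
    constructor
    · rintro h
      obtain ⟨k, hk⟩ := evaln_complete.1 (Part.get_mem h)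
      exact ⟨k, by simp [Option.isSome_iff_exists, Option.mem_def] at hk ⊢; exact ⟨_, hk⟩⟩
    · rintro ⟨k, hk⟩
      rw [Option.isSome_iff_exists] at hk
      obtain ⟨x, hx⟩ := hk
      exact Part.dom_iff_mem.2 ⟨x, evaln_sound hx⟩

theorem bounded_wit (l : List ℕ) (q : ℕ → ℕ → Bool) (h : ∀ x ∈ l, ∃ t, q x t = true) :
    ∃ s, ∀ x ∈ l, ∃ t ≤ s, q x t = true := by
  induction l with
  | nil => exact ⟨0, by simp⟩
  | cons a l ih =>
    obtain ⟨s, hs⟩ := ih fun x hx => h x (List.mem_cons_of_mem _ hx)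
    obtain ⟨t, ht⟩ := h a List.mem_cons_self
    refine ⟨max t s, ?_⟩
    intro x hx
    rcases List.mem_cons.1 hx with rfl | hx
    · exact ⟨t, le_max_left _ _, ht⟩
    · obtain ⟨t', ht', hq⟩ := hs x hx
      exact ⟨t', le_trans ht' (le_max_right _ _), hq⟩

theorem kpair_closed_downward (A0 A1 B : Set ℕ)
    (h : KPair A0 B) (hred : EnumReducible A1 A0) : KPair A1 B := by
  obtain ⟨W, hWre, hW1, hW2⟩ := h
  obtain ⟨Φ, hΦre, hΦ⟩ := hred
  obtain ⟨fW, hfWp, hfW⟩ := exists_bool_of_re hWre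
  obtain ⟨fΦ, hfΦp, hfΦ⟩ := exists_bool_of_re hΦre
  set F : ℕ × ℕ → ℕ → Bool := fun p n =>
    fΦ (p.1, n.unpair.1) n.unpair.2.unpair.1 &&
      (klist n.unpair.1).all fun x =>
        (List.range (n.unpair.2.unpair.2 + 1)).any fun t => fW (x, p.2) t with hF
  have hFp : Primrec₂ F := by
    have goal : Primrec fun q : (ℕ × ℕ) × ℕ => F q.1 q.2 := by
      simp only [hF]
      apply (Primrec.dom_bool₂ (· && ·)).comp
      · exact hfΦp.comp
          ((Primrec.fst.comp Primrec.fst).pair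
            (Primrec.fst.comp (Primrec.unpair.comp Primrec.snd)))
          (Primrec.fst.comp (Primrec.unpair.comp
            (Primrec.snd.comp (Primrec.unpair.comp Primrec.snd))))
      · exact primrec_all
          (klist_primrec.comp (Primrec.fst.comp (Primrec.unpair.comp Primrec.snd)))
          (Primrec.to₂ (primrec_any
            (Primrec.list_range.comp (Primrec.succ.comp
              (Primrec.snd.comp (Primrec.unpair.comp
                (Primrec.snd.comp (Primrec.unpair.comp
                  (Primrec.snd.comp Primrec.fst)))))))
            (Primrec.to₂ (hfWp.comp
              ((Primrec.snd.comp Primrec.fst).pair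
                (Primrec.snd.comp (Primrec.fst.comp (Primrec.fst.comp Primrec.fst))))
              Primrec.snd))))
    exact goal
  have key : ∀ a b : ℕ, (∃ n, F (a, b) n = true) ↔
      ∃ d, (a, d) ∈ Φ ∧ ∀ x ∈ Kfin d, (x, b) ∈ W := by
    intro a b
    constructor
    · rintro ⟨n, hn⟩
      rw [hF] at hn
      simp only [Bool.and_eq_true, List.all_eq_true, List.any_eq_true, List.mem_range] at hn
      obtain ⟨h1, h2⟩ := hn
      refine ⟨n.unpair.1, (hfΦ _).2 ⟨_, h1⟩, fun x hx => ?_⟩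
      obtain ⟨t, _, ht⟩ := h2 x ((mem_Kfin x _).1 hx)
      exact (hfW _).2 ⟨t, ht⟩
    · rintro ⟨d, hd1, hd2⟩
      obtain ⟨s1, hs1⟩ := (hfΦ _).1 hd1
      have hall : ∀ x ∈ klist d, ∃ t, fW (x, b) t = true := fun x hx =>
        (hfW _).1 (hd2 x ((mem_Kfin x d).2 hx))
      obtain ⟨s2, hs2⟩ := bounded_wit (klist d) _ hall
      refine ⟨Nat.pair d (Nat.pair s1 s2), ?_⟩
      rw [hF]
      simp only [Nat.unpair_pair, Bool.and_eq_true, List.all_eq_true, List.any_eq_true,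
        List.mem_range]
      refine ⟨hs1, fun x hx => ?_⟩
      obtain ⟨t, ht, hq⟩ := hs2 x hx
      exact ⟨t, Nat.lt_succ_of_le ht, hq⟩
  refine ⟨{p | ∃ n, F p n = true}, ?_, ?_, ?_⟩
  · exact re_of_exists_bool hFp.to_comp (fun _ => Iff.rfl)
  · intro a ha b hb
    obtain ⟨d, hd, hsub⟩ := (hΦ a).1 ha
    exact (key a b).2 ⟨d, hd, fun x hx => hW1 x (hsub hx) b hb⟩
  · intro a ha b hb hmem
    obtain ⟨d, hd, hall⟩ := (key a b).1 hmem
    have hsub : (↑(Kfin d) : Set ℕ) ⊆ A0 := fun x hx => by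
      by_contra hx0
      exact hW2 x hx0 b hb (hall x hx)
    exact ha ((hΦ a).2 ⟨d, hd, hsub⟩)
end
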